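/- For any a > 0, v ≥ 0, and integer n ≥ 1, with f_a(x) = a/n + 2v(1 - cos x) and g_a(x) = sin(x)/f_a(x), one has sup_{0 ≤ x ≤ π} |g_a'(x)| ≤ 3n/a. -/

import Mathlib

open Real Set

theorem stmt_1 (a v : ℝ) (n : ℕ) (ha : 0 < a) (hv : 0 ≤ v) (hn : 1 ≤ n) :
    sSup ((fun x =>
        |deriv (fun y => Real.sin y / (a / n + 2 * v * (1 - Real.cos y))) x|) ''
        Set.Icc 0 Real.pi) ≤ 3 * n / a := by
  have hn0 : (0:ℝ) < n := by exact_mod_cast Nat.lt_of_lt_of_le Nat.zero_lt_one hn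
  have han : 0 < a / n := div_pos ha hn0
  apply Real.sSup_le
  · rintro y ⟨x, hx, rfl⟩
    obtain ⟨hx0, hxpi⟩ := hx
    set F : ℝ := a / n + 2 * v * (1 - Real.cos x) with hFdef
    have hcos1 : Real.cos x ≤ 1 := Real.cos_le_one x
    have hcos2 : -1 ≤ Real.cos x := Real.neg_one_le_cos x
    have h2v : 0 ≤ 2 * v * (1 - Real.cos x) := by nlinarith
    have hF : 0 < F := by positivity
    have hFne : F ≠ 0 := ne_of_gt hF
    have hs : 0 ≤ Real.sin x := Real.sin_nonneg_of_nonneg_of_le_pi hx0 hxpi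
    have hd : HasDerivAt (fun y => a / (n:ℝ) + 2 * v * (1 - Real.cos y))
        (2 * v * Real.sin x) x := by
      have := (((Real.hasDerivAt_cos x).const_sub 1).const_mul (2*v)).const_add (a/(n:ℝ))
      exact this.congr_deriv (by ring)
    have hg : HasDerivAt (fun y => Real.sin y / (a / (n:ℝ) + 2 * v * (1 - Real.cos y)))
        ((Real.cos x * F - Real.sin x * (2 * v * Real.sin x)) / F ^ 2) x :=
      (Real.hasDerivAt_sin x).div hd hFne
    simp only
    rw [hg.deriv]
    have hpyth : Real.sin x ^ 2 + Real.cos x ^ 2 = 1 := Real.sin_sq_add_cos_sq x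
    have hnum : |Real.cos x * F - Real.sin x * (2 * v * Real.sin x)| ≤ 3 * F := by
      rw [hFdef, abs_le]
      constructor <;>
        nlinarith [mul_nonneg hv (sq_nonneg (1 - Real.cos x)),
          mul_nonneg hv (sq_nonneg (Real.sin x)),
          mul_nonneg han.le (by linarith : (0:ℝ) ≤ 1 + Real.cos x), h2v, hpyth]
    have : |(Real.cos x * F - Real.sin x * (2 * v * Real.sin x)) / F ^ 2|
        = |Real.cos x * F - Real.sin x * (2 * v * Real.sin x)| / F ^ 2 := by
      rw [abs_div, abs_of_pos (by positivity : (0:ℝ) < F ^ 2)]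
    rw [this]
    have h3F : |Real.cos x * F - Real.sin x * (2 * v * Real.sin x)| / F ^ 2 ≤ 3 / F := by
      rw [div_le_div_iff₀ (by positivity) hF]
      nlinarith [hnum, hF]
    refine le_trans h3F ?_
    rw [div_le_div_iff₀ hF ha]
    have hFge : a / n ≤ F := by linarith
    have : a ≤ n * F := by
      rw [div_le_iff₀ hn0] at hFge
      linarith [mul_comm F (n:ℝ)]
    nlinarith
  · positivity
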